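/- Let v ∈ V_h^0. Then −(H_y δ_x² v, v) ≥ (2/3)‖δ_x v‖_x², −(H_x δ_y² v, v) ≥ (2/3)‖δ_y v‖_y², and (4/9)‖v‖ ≤ ‖H_h v‖ ≤ ‖v‖. -/

import Mathlib

open Finset

noncomputable section

/-- A grid function on the `(M_x+1) × (M_y+1)` grid, represented as a total function
(only the values at indices `0 ≤ i ≤ M_x`, `0 ≤ j ≤ M_y` are relevant). -/
abbrev GridFn : Type := ℕ → ℕ → ℝ

/-- Spatial stepsize `h_x = 1/M_x`. -/
def hx (Mx : ℕ) : ℝ := ((Mx : ℝ))⁻¹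

/-- Spatial stepsize `h_y = 1/M_y`. -/
def hy (My : ℕ) : ℝ := ((My : ℝ))⁻¹

/-- Second-order difference in the x-direction:
`δ_x² v_{i,j} = (v_{i+1,j} − 2v_{i,j} + v_{i−1,j})/h_x²` (used for `1 ≤ i ≤ M_x−1`). -/
def dxx (Mx : ℕ) (v : GridFn) : GridFn := fun i j =>
  (v (i + 1) j - 2 * v i j + v (i - 1) j) / (hx Mx) ^ 2

/-- Second-order difference in the y-direction. -/
def dyy (My : ℕ) (v : GridFn) : GridFn := fun i j =>
  (v i (j + 1) - 2 * v i j + v i (j - 1)) / (hy My) ^ 2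

/-- Compact operator `H_x`: `H_x v_{i,j} = v_{i,j} + (h_x²/12) δ_x² v_{i,j}` for
`1 ≤ i ≤ M_x−1`, and `H_x v_{i,j} = v_{i,j}` for `i ∈ {0, M_x}`. -/
def Hcx (Mx : ℕ) (v : GridFn) : GridFn := fun i j =>
  if 1 ≤ i ∧ i ≤ Mx - 1 then v i j + (hx Mx) ^ 2 / 12 * dxx Mx v i j else v i j

/-- Compact operator `H_y`. -/
def Hcy (My : ℕ) (v : GridFn) : GridFn := fun i j =>
  if 1 ≤ j ∧ j ≤ My - 1 then v i j + (hy My) ^ 2 / 12 * dyy My v i j else v i j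

/-- Compact operator `H_h = H_x H_y`. -/
def Hch (Mx My : ℕ) (v : GridFn) : GridFn := Hcx Mx (Hcy My v)

/-- `Λ_h v = H_y(δ_x² v) + H_x(δ_y² v)` (at interior indices). -/
def Lamh (Mx My : ℕ) (v : GridFn) : GridFn := fun i j =>
  Hcy My (dxx Mx v) i j + Hcx Mx (dyy My v) i j

/-- Discrete L² inner product
`(v,w) = h_x h_y Σ_{i=1}^{M_x−1} Σ_{j=1}^{M_y−1} v_{i,j} w_{i,j}`. -/
def innp (Mx My : ℕ) (v w : GridFn) : ℝ :=
  hx Mx * hy My * ∑ i ∈ Icc 1 (Mx - 1), ∑ j ∈ Icc 1 (My - 1), v i j * w i j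

/-- Discrete L² norm `‖v‖ = (v,v)^{1/2}`. -/
def nrm (Mx My : ℕ) (v : GridFn) : ℝ := Real.sqrt (innp Mx My v v)

/-- Discrete maximum norm `‖v‖_∞ = max_{1≤i≤M_x−1, 1≤j≤M_y−1} |v_{i,j}|`. -/
def nrmInf (Mx My : ℕ) (v : GridFn) : ℝ :=
  ((Icc 1 (Mx - 1)) ×ˢ (Icc 1 (My - 1))).fold max 0 fun p => |v p.1 p.2|

/-- `‖δ_x v‖_x² = h_x h_y Σ_{i=1}^{M_x} Σ_{j=1}^{M_y−1} (δ_x v_{i−1/2,j})²`. -/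
def nrmX2 (Mx My : ℕ) (v : GridFn) : ℝ :=
  hx Mx * hy My * ∑ i ∈ Icc 1 Mx, ∑ j ∈ Icc 1 (My - 1),
    ((v i j - v (i - 1) j) / hx Mx) ^ 2

/-- `‖δ_y v‖_y² = h_x h_y Σ_{i=1}^{M_x−1} Σ_{j=1}^{M_y} (δ_y v_{i,j−1/2})²`. -/
def nrmY2 (Mx My : ℕ) (v : GridFn) : ℝ :=
  hx Mx * hy My * ∑ i ∈ Icc 1 (Mx - 1), ∑ j ∈ Icc 1 My,
    ((v i j - v i (j - 1)) / hy My) ^ 2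

/-- Membership in `V_h^0`: a grid function vanishing on the boundary of the grid. -/
def BZero (Mx My : ℕ) (v : GridFn) : Prop :=
  ∀ i ≤ Mx, ∀ j ≤ My, (i = 0 ∨ i = Mx ∨ j = 0 ∨ j = My) → v i j = 0

/-- Interior grid indices: `1 ≤ i ≤ M_x−1`, `1 ≤ j ≤ M_y−1`. -/
def interiorIdx (Mx My i j : ℕ) : Prop :=
  1 ≤ i ∧ i ≤ Mx - 1 ∧ 1 ≤ j ∧ j ≤ My - 1

/-- Time average `w̄^{n−1/2} = (w^n + w^{n−1})/2` of a sequence of grid functions. -/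
def tbar (u : ℕ → GridFn) (n : ℕ) : GridFn := fun i j => (u n i j + u (n - 1) i j) / 2

/-- Time difference `δ_t w^{n−1/2} = (w^n − w^{n−1})/τ` of a sequence of grid functions. -/
def tdiff (τ : ℝ) (u : ℕ → GridFn) (n : ℕ) : GridFn := fun i j =>
  (u n i j - u (n - 1) i j) / τ

/-- Extrapolation `l^{*,1} = l⁰`, `l^{*,n} = (3 l^{n−1} − l^{n−2})/2` for `n ≥ 2`. -/
def extrap (u : ℕ → GridFn) (n : ℕ) : GridFn :=
  if n = 1 then u 0 else fun i j => (3 * u (n - 1) i j - u (n - 2) i j) / 2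


lemma icc_one (f : ℕ → ℝ) (m : ℕ) :
    ∑ i ∈ Icc 1 m, f i = ∑ i ∈ Finset.range m, f (i+1) := by
  induction m with
  | zero => simp
  | succ n ih => rw [Finset.sum_Icc_succ_top (by omega), Finset.sum_range_succ, ih]

lemma abel_id (a b : ℕ → ℝ) :
    ∀ m : ℕ, ∑ i ∈ Finset.range m, (a (i+1+1) - 2*a (i+1) + a i) * b (i+1)
      = (a (m+1) - a m) * b m - (a 1 - a 0) * b 0
        - ∑ i ∈ Finset.range m, (a (i+1) - a i) * (b (i+1) - b i)
  | 0 => by simp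
  | (m+1) => by
      rw [Finset.sum_range_succ, Finset.sum_range_succ, abel_id a b m]
      ring

lemma sbp (m : ℕ) (a b : ℕ → ℝ) (hb0 : b 0 = 0) (hbM : b (m+1) = 0) :
    ∑ i ∈ Icc 1 m, (a (i+1) - 2*a i + a (i-1)) * b i
      = -∑ i ∈ Icc 1 (m+1), (a i - a (i-1)) * (b i - b (i-1)) := by
  rw [icc_one, icc_one]
  simp only [Nat.add_sub_cancel]
  rw [abel_id, Finset.sum_range_succ, hb0, hbM]
  ring

lemma inv_ineq (m : ℕ) (a : ℕ → ℝ) (h0 : a 0 = 0) (hM : a (m+1) = 0) :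
    ∑ i ∈ Icc 1 (m+1), (a i - a (i-1))^2 ≤ 4 * ∑ i ∈ Icc 1 m, (a i)^2 := by
  rw [icc_one, icc_one]
  simp only [Nat.add_sub_cancel]
  have h1 : ∑ i ∈ Finset.range (m+1), (a (i+1))^2 = ∑ i ∈ Finset.range m, (a (i+1))^2 := by
    rw [Finset.sum_range_succ, hM]; ring
  have h2 : ∑ i ∈ Finset.range (m+1), (a i)^2 = ∑ i ∈ Finset.range m, (a (i+1))^2 := by
    rw [Finset.sum_range_succ' (fun i => (a i)^2) m, h0]; ring
  calc ∑ i ∈ Finset.range (m+1), (a (i+1) - a i)^2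
      ≤ ∑ i ∈ Finset.range (m+1), (2*(a (i+1))^2 + 2*(a i)^2) :=
        Finset.sum_le_sum fun i _ => by nlinarith [sq_nonneg (a (i+1) + a i)]
    _ = 2*(∑ i ∈ Finset.range (m+1), (a (i+1))^2) + 2*(∑ i ∈ Finset.range (m+1), (a i)^2) := by
        rw [Finset.sum_add_distrib, ← Finset.mul_sum, ← Finset.mul_sum]
    _ ≤ 4 * ∑ i ∈ Finset.range m, (a (i+1))^2 := by rw [h1, h2]; ring_nf; linarith [le_refl (∑ i ∈ Finset.range m, (a (i+1))^2)]

lemma pos_bound (m : ℕ) (w : ℕ → ℝ) (h0 : w 0 = 0) (hM : w (m+1) = 0) :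
    2/3 * ∑ i ∈ Icc 1 m, (w i)^2
      ≤ ∑ i ∈ Icc 1 m, ((w (i+1) + 10*w i + w (i-1))/12) * w i := by
  have e : ∑ i ∈ Icc 1 m, ((w (i+1) + 10*w i + w (i-1))/12) * w i
      = ∑ i ∈ Icc 1 m, ((w i)^2 + 1/12 * ((w (i+1) - 2*w i + w (i-1)) * w i)) :=
    Finset.sum_congr rfl fun i _ => by ring
  have e2 : ∑ i ∈ Icc 1 (m+1), (w i - w (i-1)) * (w i - w (i-1))
      = ∑ i ∈ Icc 1 (m+1), (w i - w (i-1))^2 :=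
    Finset.sum_congr rfl fun i _ => by ring
  rw [e, Finset.sum_add_distrib, ← Finset.mul_sum, sbp m w w h0 hM, e2]
  have h := inv_ineq m w h0 hM
  linarith

lemma avg_bound (m : ℕ) (w : ℕ → ℝ) (h0 : w 0 = 0) (hM : w (m+1) = 0) :
    ∑ i ∈ Icc 1 m, ((w (i+1) + 10*w i + w (i-1))/12)^2 ≤ ∑ i ∈ Icc 1 m, (w i)^2 := by
  rw [icc_one, icc_one]
  simp only [Nat.add_sub_cancel]
  have h1 : ∑ i ∈ Finset.range m, (w (i+1+1))^2 ≤ ∑ i ∈ Finset.range m, (w (i+1))^2 := by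
    have ha : ∑ i ∈ Finset.range (m+1), (w (i+1))^2 = ∑ i ∈ Finset.range m, (w (i+1))^2 := by
      rw [Finset.sum_range_succ, hM]; ring
    have hb := Finset.sum_range_succ' (fun i => (w (i+1))^2) m
    nlinarith [sq_nonneg (w 1)]
  have h2 : ∑ i ∈ Finset.range m, (w i)^2 ≤ ∑ i ∈ Finset.range m, (w (i+1))^2 := by
    have ha : ∑ i ∈ Finset.range (m+1), (w i)^2 = ∑ i ∈ Finset.range m, (w (i+1))^2 := by
      rw [Finset.sum_range_succ' (fun i => (w i)^2) m, h0]; ring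
    have hb := Finset.sum_range_succ (fun i => (w i)^2) m
    nlinarith [sq_nonneg (w m)]
  calc ∑ i ∈ Finset.range m, ((w (i+1+1) + 10*w (i+1) + w i)/12)^2
      ≤ ∑ i ∈ Finset.range m, (1/12 * ((w (i+1+1))^2 + 10*(w (i+1))^2 + (w i)^2)) :=
        Finset.sum_le_sum fun i _ => by
          nlinarith [sq_nonneg (w (i+1+1) - w (i+1)), sq_nonneg (w (i+1) - w i),
            sq_nonneg (w (i+1+1) - w i)]
    _ = 1/12 * ((∑ i ∈ Finset.range m, (w (i+1+1))^2) + 10*(∑ i ∈ Finset.range m, (w (i+1))^2)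
          + ∑ i ∈ Finset.range m, (w i)^2) := by
        rw [← Finset.mul_sum, Finset.sum_add_distrib, Finset.sum_add_distrib, ← Finset.mul_sum]
    _ ≤ ∑ i ∈ Finset.range m, (w (i+1))^2 := by linarith

lemma low1 (m : ℕ) (w : ℕ → ℝ) (h0 : w 0 = 0) (hM : w (m+1) = 0) :
    4/9 * ∑ i ∈ Icc 1 m, (w i)^2 ≤ ∑ i ∈ Icc 1 m, ((w (i+1) + 10*w i + w (i-1))/12)^2 := by
  have hp := pos_bound m w h0 hM
  have hcs := Finset.sum_mul_sq_le_sq_mul_sq (Icc 1 m) (fun i => (w (i+1) + 10*w i + w (i-1))/12)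
    (fun i => w i)
  have hT : (0:ℝ) ≤ ∑ i ∈ Icc 1 m, (w i)^2 := Finset.sum_nonneg fun i _ => sq_nonneg _
  have hQ : (0:ℝ) ≤ ∑ i ∈ Icc 1 m, ((w (i+1) + 10*w i + w (i-1))/12)^2 :=
    Finset.sum_nonneg fun i _ => sq_nonneg _
  rcases eq_or_lt_of_le hT with h | h
  · rw [← h]; linarith
  · rw [← mul_le_mul_iff_of_pos_right h]
    nlinarith
lemma hcy_transpose (M : ℕ) (w : GridFn) (i j : ℕ) :
    Hcy M w i j = Hcx M (fun a b => w b a) j i := rfl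

lemma up2 (mx my : ℕ) (w : GridFn)
    (hb : ∀ j ∈ Icc 1 my, w 0 j = 0 ∧ w (mx+1) j = 0) :
    ∑ i ∈ Icc 1 mx, ∑ j ∈ Icc 1 my, (Hcx (mx+1) w i j)^2
      ≤ ∑ i ∈ Icc 1 mx, ∑ j ∈ Icc 1 my, (w i j)^2 := by
  rw [Finset.sum_comm, Finset.sum_comm (s := Icc 1 mx)]
  refine Finset.sum_le_sum fun j hj => ?_
  have hne : ((mx+1:ℕ):ℝ) ≠ 0 := Nat.cast_ne_zero.mpr (by omega)
  have e : ∀ i ∈ Icc 1 mx, (Hcx (mx+1) w i j)^2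
      = ((w (i+1) j + 10*w i j + w (i-1) j)/12)^2 := by
    intro i hi
    rw [Finset.mem_Icc] at hi
    simp only [Hcx, dxx, hx]
    rw [if_pos ⟨hi.1, by omega⟩]
    rw [show w i j + (((mx+1:ℕ):ℝ)⁻¹)^2/12 * ((w (i+1) j - 2*w i j + w (i-1) j)/(((mx+1:ℕ):ℝ)⁻¹)^2)
        = (w (i+1) j + 10*w i j + w (i-1) j)/12 by field_simp; ring]
  rw [Finset.sum_congr rfl e]
  exact avg_bound mx (fun i => w i j) (hb j hj).1 (hb j hj).2

lemma low2 (mx my : ℕ) (w : GridFn)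
    (hb : ∀ j ∈ Icc 1 my, w 0 j = 0 ∧ w (mx+1) j = 0) :
    4/9 * ∑ i ∈ Icc 1 mx, ∑ j ∈ Icc 1 my, (w i j)^2
      ≤ ∑ i ∈ Icc 1 mx, ∑ j ∈ Icc 1 my, (Hcx (mx+1) w i j)^2 := by
  rw [Finset.sum_comm, Finset.sum_comm (s := Icc 1 mx), Finset.mul_sum]
  refine Finset.sum_le_sum fun j hj => ?_
  have hne : ((mx+1:ℕ):ℝ) ≠ 0 := Nat.cast_ne_zero.mpr (by omega)
  have e : ∀ i ∈ Icc 1 mx, (Hcx (mx+1) w i j)^2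
      = ((w (i+1) j + 10*w i j + w (i-1) j)/12)^2 := by
    intro i hi
    rw [Finset.mem_Icc] at hi
    simp only [Hcx, dxx, hx]
    rw [if_pos ⟨hi.1, by omega⟩]
    rw [show w i j + (((mx+1:ℕ):ℝ)⁻¹)^2/12 * ((w (i+1) j - 2*w i j + w (i-1) j)/(((mx+1:ℕ):ℝ)⁻¹)^2)
        = (w (i+1) j + 10*w i j + w (i-1) j)/12 by field_simp; ring]
  rw [Finset.sum_congr rfl e]
  exact low1 mx (fun i => w i j) (hb j hj).1 (hb j hj).2

lemma up2y (mx my : ℕ) (w : GridFn)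
    (hb : ∀ i ∈ Icc 1 mx, w i 0 = 0 ∧ w i (my+1) = 0) :
    ∑ i ∈ Icc 1 mx, ∑ j ∈ Icc 1 my, (Hcy (my+1) w i j)^2
      ≤ ∑ i ∈ Icc 1 mx, ∑ j ∈ Icc 1 my, (w i j)^2 := by
  have h := up2 my mx (fun a b => w b a) hb
  simp only [hcy_transpose]
  calc ∑ i ∈ Icc 1 mx, ∑ j ∈ Icc 1 my, (Hcx (my+1) (fun a b => w b a) j i)^2
      = ∑ j ∈ Icc 1 my, ∑ i ∈ Icc 1 mx, (Hcx (my+1) (fun a b => w b a) j i)^2 :=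
        Finset.sum_comm
    _ ≤ ∑ j ∈ Icc 1 my, ∑ i ∈ Icc 1 mx, w i j ^2 := h
    _ = ∑ i ∈ Icc 1 mx, ∑ j ∈ Icc 1 my, (w i j)^2 := Finset.sum_comm

lemma low2y (mx my : ℕ) (w : GridFn)
    (hb : ∀ i ∈ Icc 1 mx, w i 0 = 0 ∧ w i (my+1) = 0) :
    4/9 * ∑ i ∈ Icc 1 mx, ∑ j ∈ Icc 1 my, (w i j)^2
      ≤ ∑ i ∈ Icc 1 mx, ∑ j ∈ Icc 1 my, (Hcy (my+1) w i j)^2 := by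
  have h := low2 my mx (fun a b => w b a) hb
  simp only [hcy_transpose]
  calc 4/9 * ∑ i ∈ Icc 1 mx, ∑ j ∈ Icc 1 my, (w i j)^2
      = 4/9 * ∑ j ∈ Icc 1 my, ∑ i ∈ Icc 1 mx, w i j ^2 := by rw [Finset.sum_comm]
    _ ≤ ∑ j ∈ Icc 1 my, ∑ i ∈ Icc 1 mx, (Hcx (my+1) (fun a b => w b a) j i)^2 := h
    _ = ∑ i ∈ Icc 1 mx, ∑ j ∈ Icc 1 my, (Hcx (my+1) (fun a b => w b a) j i)^2 :=
        Finset.sum_comm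
lemma main1 (Mx My : ℕ) (hMx : 2 ≤ Mx) (hMy : 2 ≤ My) (v : GridFn)
    (hv : BZero Mx My v) :
    2 / 3 * nrmX2 Mx My v ≤ -(innp Mx My (Hcy My (dxx Mx v)) v) := by
  obtain ⟨mx, rfl⟩ : ∃ m, Mx = m + 1 := ⟨Mx - 1, by omega⟩
  obtain ⟨my, rfl⟩ : ∃ m, My = m + 1 := ⟨My - 1, by omega⟩
  have hvx0 : ∀ j ≤ my+1, v 0 j = 0 := fun j hj => hv 0 (by omega) j hj (Or.inl rfl)
  have hvxM : ∀ j ≤ my+1, v (mx+1) j = 0 := fun j hj =>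
    hv (mx+1) (by omega) j hj (Or.inr (Or.inl rfl))
  have hvy0 : ∀ i ≤ mx+1, v i 0 = 0 := fun i hi =>
    hv i hi 0 (by omega) (Or.inr (Or.inr (Or.inl rfl)))
  have hvyM : ∀ i ≤ mx+1, v i (my+1) = 0 := fun i hi =>
    hv i hi (my+1) (by omega) (Or.inr (Or.inr (Or.inr rfl)))
  have hne : ((mx+1:ℕ):ℝ) ≠ 0 := Nat.cast_ne_zero.mpr (by omega)
  have hfne : ((my+1:ℕ):ℝ) ≠ 0 := Nat.cast_ne_zero.mpr (by omega)
  -- abbreviations (as plain terms)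
  -- P' : i-outer gradient-square sum ; P : j-outer ; C : mixed-difference sum
  have hPP : (∑ j ∈ Icc 1 my, ∑ i ∈ Icc 1 (mx+1), (v i j - v (i-1) j)^2)
      = ∑ i ∈ Icc 1 (mx+1), ∑ j ∈ Icc 1 my, (v i j - v (i-1) j)^2 := Finset.sum_comm
  -- nrmX2 identity
  have hn : nrmX2 (mx+1) (my+1) v
      = hx (mx+1) * hy (my+1) * ((1/(hx (mx+1))^2)
          * ∑ i ∈ Icc 1 (mx+1), ∑ j ∈ Icc 1 my, (v i j - v (i-1) j)^2) := by
    unfold nrmX2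
    simp only [Nat.add_sub_cancel]
    congr 1
    rw [Finset.mul_sum]
    refine Finset.sum_congr rfl fun i _ => ?_
    rw [Finset.mul_sum]
    refine Finset.sum_congr rfl fun j _ => ?_
    rw [div_pow]; ring
  -- A = -P
  have hA : (∑ i ∈ Icc 1 mx, ∑ j ∈ Icc 1 my, (v (i+1) j - 2*v i j + v (i-1) j) * v i j)
      = -∑ j ∈ Icc 1 my, ∑ i ∈ Icc 1 (mx+1), (v i j - v (i-1) j)^2 := by
    rw [Finset.sum_comm, ← Finset.sum_neg_distrib]
    refine Finset.sum_congr rfl fun j hj => ?_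
    rw [Finset.mem_Icc] at hj
    have h := sbp mx (fun i => v i j) (fun i => v i j) (hvx0 j (by omega)) (hvxM j (by omega))
    rw [h]
    congr 1
    exact Finset.sum_congr rfl fun i _ => by ring
  -- B = C
  have hB : (∑ i ∈ Icc 1 mx, ∑ j ∈ Icc 1 my,
        ((v (i+1) (j+1) - 2*v i (j+1) + v (i-1) (j+1))
          - 2*(v (i+1) j - 2*v i j + v (i-1) j)
          + (v (i+1) (j-1) - 2*v i (j-1) + v (i-1) (j-1))) * v i j)
      = ∑ j ∈ Icc 1 (my+1), ∑ i ∈ Icc 1 (mx+1),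
          ((v i j - v i (j-1)) - (v (i-1) j - v (i-1) (j-1)))^2 := by
    have step1 : ∀ i ∈ Icc 1 mx,
        (∑ j ∈ Icc 1 my,
          ((v (i+1) (j+1) - 2*v i (j+1) + v (i-1) (j+1))
            - 2*(v (i+1) j - 2*v i j + v (i-1) j)
            + (v (i+1) (j-1) - 2*v i (j-1) + v (i-1) (j-1))) * v i j)
        = -∑ j ∈ Icc 1 (my+1),
            ((v (i+1) j - 2*v i j + v (i-1) j)
              - (v (i+1) (j-1) - 2*v i (j-1) + v (i-1) (j-1))) * (v i j - v i (j-1)) := by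
      intro i hi
      rw [Finset.mem_Icc] at hi
      have h := sbp my (fun j => v (i+1) j - 2*v i j + v (i-1) j) (fun j => v i j)
        (hvy0 i (by omega)) (hvyM i (by omega))
      rw [h]
    calc (∑ i ∈ Icc 1 mx, ∑ j ∈ Icc 1 my,
          ((v (i+1) (j+1) - 2*v i (j+1) + v (i-1) (j+1))
            - 2*(v (i+1) j - 2*v i j + v (i-1) j)
            + (v (i+1) (j-1) - 2*v i (j-1) + v (i-1) (j-1))) * v i j)
        = ∑ i ∈ Icc 1 mx, -∑ j ∈ Icc 1 (my+1),
            ((v (i+1) j - 2*v i j + v (i-1) j)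
              - (v (i+1) (j-1) - 2*v i (j-1) + v (i-1) (j-1))) * (v i j - v i (j-1)) :=
          Finset.sum_congr rfl step1
      _ = -∑ i ∈ Icc 1 mx, ∑ j ∈ Icc 1 (my+1),
            ((v (i+1) j - 2*v i j + v (i-1) j)
              - (v (i+1) (j-1) - 2*v i (j-1) + v (i-1) (j-1))) * (v i j - v i (j-1)) :=
          Finset.sum_neg_distrib _
      _ = -∑ j ∈ Icc 1 (my+1), ∑ i ∈ Icc 1 mx,
            ((v (i+1) j - 2*v i j + v (i-1) j)
              - (v (i+1) (j-1) - 2*v i (j-1) + v (i-1) (j-1))) * (v i j - v i (j-1)) := by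
          rw [Finset.sum_comm]
      _ = -∑ j ∈ Icc 1 (my+1), ∑ i ∈ Icc 1 mx,
            ((v (i+1) j - v (i+1) (j-1)) - 2*(v i j - v i (j-1)) + (v (i-1) j - v (i-1) (j-1)))
              * (v i j - v i (j-1)) := by
          congr 1
          exact Finset.sum_congr rfl fun j _ => Finset.sum_congr rfl fun i _ => by ring
      _ = -∑ j ∈ Icc 1 (my+1), -∑ i ∈ Icc 1 (mx+1),
            ((v i j - v i (j-1)) - (v (i-1) j - v (i-1) (j-1)))
              * ((v i j - v i (j-1)) - (v (i-1) j - v (i-1) (j-1))) := by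
          congr 1
          refine Finset.sum_congr rfl fun j hj => ?_
          rw [Finset.mem_Icc] at hj
          have hb0 : (fun k => v k j - v k (j-1)) 0 = 0 := by
            show v 0 j - v 0 (j-1) = 0
            rw [hvx0 j (by omega), hvx0 (j-1) (by omega)]; ring
          have hbM : (fun k => v k j - v k (j-1)) (mx+1) = 0 := by
            show v (mx+1) j - v (mx+1) (j-1) = 0
            rw [hvxM j (by omega), hvxM (j-1) (by omega)]; ring
          have h := sbp mx (fun k => v k j - v k (j-1)) (fun k => v k j - v k (j-1)) hb0 hbM
          rw [h]
      _ = ∑ j ∈ Icc 1 (my+1), ∑ i ∈ Icc 1 (mx+1),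
            ((v i j - v i (j-1)) - (v (i-1) j - v (i-1) (j-1)))^2 := by
          rw [← Finset.sum_neg_distrib]
          simp only [neg_neg]
          exact Finset.sum_congr rfl fun j _ => Finset.sum_congr rfl fun i _ => by ring
  -- C <= 4 P'
  have hC : (∑ j ∈ Icc 1 (my+1), ∑ i ∈ Icc 1 (mx+1),
        ((v i j - v i (j-1)) - (v (i-1) j - v (i-1) (j-1)))^2)
      ≤ 4 * ∑ i ∈ Icc 1 (mx+1), ∑ j ∈ Icc 1 my, (v i j - v (i-1) j)^2 := by
    rw [Finset.sum_comm, Finset.mul_sum]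
    refine Finset.sum_le_sum fun i hi => ?_
    rw [Finset.mem_Icc] at hi
    have h := inv_ineq my (fun j => v i j - v (i-1) j)
      (by show v i 0 - v (i-1) 0 = 0
          rw [hvy0 i (by omega), hvy0 (i-1) (by omega)]; ring)
      (by show v i (my+1) - v (i-1) (my+1) = 0
          rw [hvyM i (by omega), hvyM (i-1) (by omega)]; ring)
    calc (∑ j ∈ Icc 1 (my+1), ((v i j - v i (j-1)) - (v (i-1) j - v (i-1) (j-1)))^2)
        = ∑ j ∈ Icc 1 (my+1), ((v i j - v (i-1) j) - (v i (j-1) - v (i-1) (j-1)))^2 :=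
          Finset.sum_congr rfl fun j _ => by ring
      _ ≤ 4 * ∑ j ∈ Icc 1 my, (v i j - v (i-1) j)^2 := h
  -- inner product identity
  have hip : innp (mx+1) (my+1) (Hcy (my+1) (dxx (mx+1) v)) v
      = hx (mx+1) * hy (my+1) * ((1/(hx (mx+1))^2)
          * ((∑ i ∈ Icc 1 mx, ∑ j ∈ Icc 1 my, (v (i+1) j - 2*v i j + v (i-1) j) * v i j)
            + (∑ i ∈ Icc 1 mx, ∑ j ∈ Icc 1 my,
                ((v (i+1) (j+1) - 2*v i (j+1) + v (i-1) (j+1))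
                  - 2*(v (i+1) j - 2*v i j + v (i-1) j)
                  + (v (i+1) (j-1) - 2*v i (j-1) + v (i-1) (j-1))) * v i j)/12)) := by
    unfold innp
    simp only [Nat.add_sub_cancel]
    congr 1
    calc (∑ i ∈ Icc 1 mx, ∑ j ∈ Icc 1 my, Hcy (my+1) (dxx (mx+1) v) i j * v i j)
        = ∑ i ∈ Icc 1 mx, ∑ j ∈ Icc 1 my, (1/(hx (mx+1))^2)
            * ((v (i+1) j - 2*v i j + v (i-1) j) * v i j
              + (((v (i+1) (j+1) - 2*v i (j+1) + v (i-1) (j+1))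
                  - 2*(v (i+1) j - 2*v i j + v (i-1) j)
                  + (v (i+1) (j-1) - 2*v i (j-1) + v (i-1) (j-1))) * v i j)/12) := by
          refine Finset.sum_congr rfl fun i _ => Finset.sum_congr rfl fun j hj => ?_
          rw [Finset.mem_Icc] at hj
          simp only [Hcy, dxx, dyy, hx, hy]
          rw [if_pos ⟨hj.1, by omega⟩]
          field_simp
      _ = (1/(hx (mx+1))^2)
          * ((∑ i ∈ Icc 1 mx, ∑ j ∈ Icc 1 my, (v (i+1) j - 2*v i j + v (i-1) j) * v i j)
            + (∑ i ∈ Icc 1 mx, ∑ j ∈ Icc 1 my,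
                ((v (i+1) (j+1) - 2*v i (j+1) + v (i-1) (j+1))
                  - 2*(v (i+1) j - 2*v i j + v (i-1) j)
                  + (v (i+1) (j-1) - 2*v i (j-1) + v (i-1) (j-1))) * v i j)/12) := by
          simp_rw [← Finset.mul_sum]
          congr 1
          simp_rw [Finset.sum_add_distrib, ← Finset.sum_div]
  have hex : (0:ℝ) < hx (mx+1) := by
    unfold hx; rw [inv_pos]; exact_mod_cast Nat.succ_pos mx
  have hey : (0:ℝ) < hy (my+1) := by
    unfold hy; rw [inv_pos]; exact_mod_cast Nat.succ_pos my
  have hK : (0:ℝ) < hx (mx+1) * hy (my+1) * (1/(hx (mx+1))^2) := by positivity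
  rw [hn, hip, hA, hPP, hB]
  nlinarith [mul_nonneg hK.le (by linarith :
    (0:ℝ) ≤ 4 * (∑ i ∈ Icc 1 (mx+1), ∑ j ∈ Icc 1 my, (v i j - v (i-1) j)^2)
      - ∑ j ∈ Icc 1 (my+1), ∑ i ∈ Icc 1 (mx+1),
          ((v i j - v i (j-1)) - (v (i-1) j - v (i-1) (j-1)))^2)]
/-- For `v ∈ V_h^0`: `−(H_y δ_x² v, v) ≥ (2/3)‖δ_x v‖_x²`,
`−(H_x δ_y² v, v) ≥ (2/3)‖δ_y v‖_y²`, and `(4/9)‖v‖ ≤ ‖H_h v‖ ≤ ‖v‖`. -/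
theorem stmt6 (Mx My : ℕ) (hMx : 2 ≤ Mx) (hMy : 2 ≤ My) (v : GridFn)
    (hv : BZero Mx My v) :
    2 / 3 * nrmX2 Mx My v ≤ -(innp Mx My (Hcy My (dxx Mx v)) v)
    ∧ 2 / 3 * nrmY2 Mx My v ≤ -(innp Mx My (Hcx Mx (dyy My v)) v)
    ∧ 4 / 9 * nrm Mx My v ≤ nrm Mx My (Hch Mx My v)
    ∧ nrm Mx My (Hch Mx My v) ≤ nrm Mx My v := by
  have h1 := main1 Mx My hMx hMy v hv
  obtain ⟨mx, rfl⟩ : ∃ m, Mx = m + 1 := ⟨Mx - 1, by omega⟩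
  obtain ⟨my, rfl⟩ : ∃ m, My = m + 1 := ⟨My - 1, by omega⟩
  have hvx0 : ∀ j ≤ my+1, v 0 j = 0 := fun j hj => hv 0 (by omega) j hj (Or.inl rfl)
  have hvxM : ∀ j ≤ my+1, v (mx+1) j = 0 := fun j hj =>
    hv (mx+1) (by omega) j hj (Or.inr (Or.inl rfl))
  have hvy0 : ∀ i ≤ mx+1, v i 0 = 0 := fun i hi =>
    hv i hi 0 (by omega) (Or.inr (Or.inr (Or.inl rfl)))
  have hvyM : ∀ i ≤ mx+1, v i (my+1) = 0 := fun i hi =>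
    hv i hi (my+1) (by omega) (Or.inr (Or.inr (Or.inr rfl)))
  -- Part 2 via transposition
  have hvT : BZero (my+1) (mx+1) (fun a b => v b a) := by
    intro i hi j hj hd
    exact hv j hj i hi (by tauto)
  have h2' := main1 (my+1) (mx+1) hMy hMx (fun a b => v b a) hvT
  have e1 : nrmY2 (mx+1) (my+1) v = nrmX2 (my+1) (mx+1) (fun a b => v b a) := by
    unfold nrmY2 nrmX2
    rw [show (∑ i ∈ Icc 1 (mx+1-1), ∑ j ∈ Icc 1 (my+1),
          ((v i j - v i (j-1)) / hy (my+1))^2)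
        = ∑ i ∈ Icc 1 (my+1), ∑ j ∈ Icc 1 (mx+1-1),
            (((fun a b => v b a) i j - (fun a b => v b a) (i-1) j) / hx (my+1))^2 from by
      rw [Finset.sum_comm]
      exact Finset.sum_congr rfl fun i _ => Finset.sum_congr rfl fun j _ => rfl]
    unfold hx hy; ring
  have e2 : innp (mx+1) (my+1) (Hcx (mx+1) (dyy (my+1) v)) v
      = innp (my+1) (mx+1) (Hcy (mx+1) (dxx (my+1) (fun a b => v b a))) (fun a b => v b a) := by
    unfold innp
    rw [show (∑ i ∈ Icc 1 (mx+1-1), ∑ j ∈ Icc 1 (my+1-1),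
          Hcx (mx+1) (dyy (my+1) v) i j * v i j)
        = ∑ i ∈ Icc 1 (my+1-1), ∑ j ∈ Icc 1 (mx+1-1),
            Hcy (mx+1) (dxx (my+1) (fun a b => v b a)) i j * (fun a b => v b a) i j from by
      rw [Finset.sum_comm]
      exact Finset.sum_congr rfl fun i _ => Finset.sum_congr rfl fun j _ => rfl]
    unfold hx hy; ring
  have h2 : 2 / 3 * nrmY2 (mx+1) (my+1) v
      ≤ -(innp (mx+1) (my+1) (Hcx (mx+1) (dyy (my+1) v)) v) := by
    rw [e1, e2]; exact h2'
  -- Parts 3 and 4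
  have hex : (0:ℝ) < hx (mx+1) := by
    unfold hx; rw [inv_pos]; exact_mod_cast Nat.succ_pos mx
  have hey : (0:ℝ) < hy (my+1) := by
    unfold hy; rw [inv_pos]; exact_mod_cast Nat.succ_pos my
  have hefpos : (0:ℝ) < hx (mx+1) * hy (my+1) := mul_pos hex hey
  have hbv : ∀ i ∈ Icc 1 mx, v i 0 = 0 ∧ v i (my+1) = 0 := by
    intro i hi; rw [Finset.mem_Icc] at hi
    exact ⟨hvy0 i (by omega), hvyM i (by omega)⟩
  have hbH : ∀ j ∈ Icc 1 my, Hcy (my+1) v 0 j = 0 ∧ Hcy (my+1) v (mx+1) j = 0 := by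
    intro j hj; rw [Finset.mem_Icc] at hj
    constructor
    · simp only [Hcy, dyy]
      split
      · rw [hvx0 (j+1) (by omega), hvx0 j (by omega), hvx0 (j-1) (by omega)]; ring
      · exact hvx0 j (by omega)
    · simp only [Hcy, dyy]
      split
      · rw [hvxM (j+1) (by omega), hvxM j (by omega), hvxM (j-1) (by omega)]; ring
      · exact hvxM j (by omega)
  have u1 := up2y mx my v hbv
  have u2 := up2 mx my (Hcy (my+1) v) hbH
  have l1 := low2y mx my v hbv
  have l2 := low2 mx my (Hcy (my+1) v) hbH
  have hIN : ∀ w : GridFn, innp (mx+1) (my+1) w w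
      = hx (mx+1) * hy (my+1) * ∑ i ∈ Icc 1 mx, ∑ j ∈ Icc 1 my, (w i j)^2 := by
    intro w
    unfold innp
    simp only [Nat.add_sub_cancel]
    congr 1
    exact Finset.sum_congr rfl fun i _ => Finset.sum_congr rfl fun j _ => by ring
  have part4 : nrm (mx+1) (my+1) (Hch (mx+1) (my+1) v) ≤ nrm (mx+1) (my+1) v := by
    unfold nrm Hch
    apply Real.sqrt_le_sqrt
    rw [hIN, hIN]
    exact mul_le_mul_of_nonneg_left (le_trans u2 u1) hefpos.le
  have part3 : 4 / 9 * nrm (mx+1) (my+1) v ≤ nrm (mx+1) (my+1) (Hch (mx+1) (my+1) v) := by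
    unfold nrm Hch
    calc 4 / 9 * Real.sqrt (innp (mx+1) (my+1) v v)
        = Real.sqrt ((4/9:ℝ)^2 * innp (mx+1) (my+1) v v) := by
          rw [Real.sqrt_mul (by positivity), Real.sqrt_sq (by norm_num)]
      _ ≤ Real.sqrt (innp (mx+1) (my+1) (Hcx (mx+1) (Hcy (my+1) v))
            (Hcx (mx+1) (Hcy (my+1) v))) := by
          apply Real.sqrt_le_sqrt
          rw [hIN, hIN]
          nlinarith [mul_le_mul_of_nonneg_left
            (by linarith : (16/81:ℝ) * (∑ i ∈ Icc 1 mx, ∑ j ∈ Icc 1 my, (v i j)^2)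
              ≤ ∑ i ∈ Icc 1 mx, ∑ j ∈ Icc 1 my, (Hcx (mx+1) (Hcy (my+1) v) i j)^2)
            hefpos.le]
  exact ⟨h1, h2, part3, part4⟩
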